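/- arXiv:2210.02267 — 4 statements merged into one kernel-verified Lean document; each statement's English description precedes it below -/
import Mathlib

section
/- For a connected finite graph K, the sum of local degrees of a harmonic morphism f : G → K over the fiber of any point (vertex or half-edge) of K is independent of that point. -/
/-- A finite graph: vertices, half-edges with a root map and a fixed-point-free
involution pairing half-edges into edges. -/
structure HGraph where
  V : Type
  H : Type
  decV : DecidableEq V
  decH : DecidableEq H
  finV : Fintype V
  finH : Fintype H
  root : H → V
  inv : H → H
  inv_inv : ∀ h, inv (inv h) = h
  inv_ne : ∀ h, inv h ≠ h

attribute [instance] HGraph.decV HGraph.decH HGraph.finV HGraph.finH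

/-- A (finite) morphism of graphs. -/
structure GraphHom (G K : HGraph) where
  fV : G.V → K.V
  fH : G.H → K.H
  root_comm : ∀ h, fV (G.root h) = K.root (fH h)
  inv_comm : ∀ h, fH (G.inv h) = K.inv (fH h)

/-- A harmonic morphism of graphs: a graph morphism together with a positive local degree
function satisfying the harmonicity (balancing) condition at every vertex. -/
structure Harmonic (G K : HGraph) extends GraphHom G K where
  dV : G.V → ℕ
  dH : G.H → ℕ
  dV_pos : ∀ v, 0 < dV v
  dH_pos : ∀ h, 0 < dH h
  dH_inv : ∀ h, dH (G.inv h) = dH h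
  harm : ∀ (v : G.V) (h' : K.H), K.root h' = fV v →
    dV v = ∑ h ∈ Finset.univ.filter (fun h => G.root h = v ∧ fH h = h'), dH h

/-- The sum of local degrees over the fiber of a point (vertex or half-edge) of `K`. -/
def fiberDeg {G K : HGraph} (f : Harmonic G K) : K.V ⊕ K.H → ℕ
  | Sum.inl v => ∑ w ∈ Finset.univ.filter (fun w => f.fV w = v), f.dV w
  | Sum.inr h => ∑ x ∈ Finset.univ.filter (fun x => f.fH x = h), f.dH x

/-- Two vertices are adjacent if some edge connects them. -/
def HGraph.Adj (G : HGraph) (u v : G.V) : Prop :=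
  ∃ h, G.root h = u ∧ G.root (G.inv h) = v

/-- A graph is connected if any two vertices are joined by a walk. -/
def HGraph.Connected (G : HGraph) : Prop :=
  ∀ u v : G.V, Relation.ReflTransGen G.Adj u v

/-- The number of edges of a graph (each edge consists of two half-edges). -/
def numEdges (G : HGraph) : ℕ := Fintype.card G.H / 2

/-- The genus (first Betti number) `|E| - |V| + 1` of a connected graph. -/
def genus (G : HGraph) : ℤ := (numEdges G : ℤ) - (Fintype.card G.V : ℤ) + 1

/-- A harmonic morphism is a double cover if it has global degree two over every point. -/
def IsDoubleCover {G K : HGraph} (f : Harmonic G K) : Prop :=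
  ∀ x : K.V ⊕ K.H, fiberDeg f x = 2

/-- A tree is a connected graph of genus zero. -/
def IsTree (K : HGraph) : Prop := K.Connected ∧ genus K = 0

lemma fiberA {G K : HGraph} (f : Harmonic G K) (h' : K.H) :
    fiberDeg f (Sum.inr h') = fiberDeg f (Sum.inl (K.root h')) := by
  simp only [fiberDeg]
  rw [← Finset.sum_fiberwise_of_maps_to (g := G.root)
    (t := Finset.univ.filter (fun w => f.fV w = K.root h'))]
  · apply Finset.sum_congr rfl
    intro w hw
    simp only [Finset.mem_filter, Finset.mem_univ, true_and] at hw
    rw [f.harm w h' hw.symm]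
    apply Finset.sum_congr
    · ext h
      simp only [Finset.mem_filter, Finset.mem_univ, true_and]
      tauto
    · intros; rfl
  · intro h hh
    simp only [Finset.mem_filter, Finset.mem_univ, true_and] at hh ⊢
    rw [f.root_comm, hh]

lemma fiberB {G K : HGraph} (f : Harmonic G K) (h' : K.H) :
    fiberDeg f (Sum.inr (K.inv h')) = fiberDeg f (Sum.inr h') := by
  simp only [fiberDeg]
  apply Finset.sum_nbij' (i := fun x => G.inv x) (j := fun x => G.inv x)
  · intro a ha
    simp only [Finset.mem_filter, Finset.mem_univ, true_and] at ha ⊢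
    rw [f.inv_comm, ha, K.inv_inv]
  · intro a ha
    simp only [Finset.mem_filter, Finset.mem_univ, true_and] at ha ⊢
    rw [f.inv_comm, ha]
  · intro a _; exact G.inv_inv a
  · intro a _; exact G.inv_inv a
  · intro a _; exact (f.dH_inv a).symm

/-- For a connected finite graph `K`, the sum of local degrees of a harmonic morphism
`f : G → K` over the fiber of any point (vertex or half-edge) of `K` is independent of
that point. -/
theorem stmt7 (G K : HGraph) (f : Harmonic G K) (hK : K.Connected)
    (x y : K.V ⊕ K.H) : fiberDeg f x = fiberDeg f y := by
  have hV : ∀ u v : K.V, fiberDeg f (Sum.inl u) = fiberDeg f (Sum.inl v) := by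
    intro u v
    induction hK u v with
    | refl => rfl
    | tail _ hadj ih =>
      obtain ⟨h, hu, hv⟩ := hadj
      rw [ih, ← hu, ← fiberA f h, ← fiberB f h, fiberA, hv]
  have hred : ∀ x : K.V ⊕ K.H, ∃ v : K.V, fiberDeg f x = fiberDeg f (Sum.inl v) := by
    intro x
    cases x with
    | inl v => exact ⟨v, rfl⟩
    | inr h => exact ⟨K.root h, fiberA f h⟩
  obtain ⟨u, hu⟩ := hred x
  obtain ⟨v, hv⟩ := hred y
  rw [hu, hv, hV u v]
end

section
/- Every isogeny of integral tori factors as a free isogeny followed by a dilation, and this factorization is unique up to a unique isomorphism of the middle torus. -/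
/-- A real torus with integral structure (integral torus): a pair `Λ, Λ'` of finitely
generated free abelian groups of the same rank together with a nondegenerate pairing
`[·,·] : Λ × Λ' → ℝ`.  The underlying torus is `Hom(Λ, ℝ)/Λ'`. -/
structure IntegralTorus where
  Λ : Type
  Λ' : Type
  grp : AddCommGroup Λ
  grp' : AddCommGroup Λ'
  fr : Module.Free ℤ Λ
  fr' : Module.Free ℤ Λ'
  fin : Module.Finite ℤ Λ
  fin' : Module.Finite ℤ Λ'
  pair : Λ →ₗ[ℤ] Λ' →ₗ[ℤ] ℝ
  rank_eq : Module.finrank ℤ Λ = Module.finrank ℤ Λ'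
  nondeg : ∀ l : Λ, l ≠ 0 → ∃ l', pair l l' ≠ 0
  nondeg' : ∀ l' : Λ', l' ≠ 0 → ∃ l, pair l l' ≠ 0

attribute [instance] IntegralTorus.grp IntegralTorus.grp'
attribute [instance] IntegralTorus.fr IntegralTorus.fr'
attribute [instance] IntegralTorus.fin IntegralTorus.fin'

/-- A homomorphism of integral tori `(f^#, f_#)`, with `f^# : Λ₂ → Λ₁` and
`f_# : Λ'₁ → Λ'₂`, compatible with the pairings. -/
structure TorusHom (T₁ T₂ : IntegralTorus) where
  sharp : T₂.Λ →ₗ[ℤ] T₁.Λ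
  flat : T₁.Λ' →ₗ[ℤ] T₂.Λ'
  compat : ∀ (a : T₂.Λ) (b : T₁.Λ'), T₁.pair (sharp a) b = T₂.pair a (flat b)

/-- Composition of homomorphisms of integral tori. -/
def TorusHom.comp {T₁ T₂ T₃ : IntegralTorus} (g : TorusHom T₂ T₃) (f : TorusHom T₁ T₂) :
    TorusHom T₁ T₃ where
  sharp := f.sharp.comp g.sharp
  flat := g.flat.comp f.flat
  compat := by
    intro a b
    simp only [LinearMap.comp_apply]
    rw [f.compat, g.compat]

/-- An isogeny of integral tori: both `f^#` and `f_#` are injective with finite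
cokernel. -/
def IsIsogeny {T₁ T₂ : IntegralTorus} (f : TorusHom T₁ T₂) : Prop :=
  Function.Injective f.sharp ∧ Function.Injective f.flat ∧
    Finite (T₁.Λ ⧸ LinearMap.range f.sharp) ∧ Finite (T₂.Λ' ⧸ LinearMap.range f.flat)

/-- A free isogeny: an isogeny whose `f^#` is an isomorphism. -/
def IsFreeIsogeny {T₁ T₂ : IntegralTorus} (f : TorusHom T₁ T₂) : Prop :=
  IsIsogeny f ∧ Function.Bijective f.sharp

/-- A dilation: an isogeny whose `f_#` is an isomorphism. -/
def IsDilation {T₁ T₂ : IntegralTorus} (f : TorusHom T₁ T₂) : Prop :=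
  IsIsogeny f ∧ Function.Bijective f.flat

/-- An isomorphism of integral tori: both components are bijective. -/
def IsTorusIso {T₁ T₂ : IntegralTorus} (f : TorusHom T₁ T₂) : Prop :=
  Function.Bijective f.sharp ∧ Function.Bijective f.flat

open TensorProduct

lemma aux_exists_smul_mem {M : Type} [AddCommGroup M] [Module ℤ M]
    (N : Submodule ℤ M) (hfin : Finite (M ⧸ N)) (x : M) :
    ∃ n : ℤ, n ≠ 0 ∧ n • x ∈ N := by
  have h : IsOfFinAddOrder (Submodule.Quotient.mk x : M ⧸ N) := isOfFinAddOrder_of_finite _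
  obtain ⟨n, hn, hx⟩ := h.exists_nsmul_eq_zero
  refine ⟨n, by exact_mod_cast hn.ne', ?_⟩
  have hnx : ((n : ℤ) • x : M) = (n : ℕ) • x := by simp
  rw [← Submodule.Quotient.mk_eq_zero, hnx]
  simpa using hx

lemma aux_finite_quot_top {M : Type} [AddCommGroup M] [Module ℤ M] :
    Finite (M ⧸ LinearMap.range (LinearMap.id : M →ₗ[ℤ] M)) := by
  rw [LinearMap.range_id]
  have : Subsingleton (M ⧸ (⊤ : Submodule ℤ M)) :=
    Submodule.Quotient.subsingleton_iff.2 rfl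
  exact Finite.of_subsingleton

lemma TorusHom.ext' {T₁ T₂ : IntegralTorus} {f g : TorusHom T₁ T₂}
    (h1 : f.sharp = g.sharp) (h2 : f.flat = g.flat) : f = g := by
  cases f; cases g; simp_all


/-- Every isogeny of integral tori factors as a free isogeny followed by a dilation, and
the factorization is unique up to a unique isomorphism of the middle torus. -/
theorem stmt12 (T₁ T₂ : IntegralTorus) (f : TorusHom T₁ T₂) (hf : IsIsogeny f) :
    ∃ (T₃ : IntegralTorus) (h : TorusHom T₁ T₃) (g : TorusHom T₃ T₂),
      IsFreeIsogeny h ∧ IsDilation g ∧ TorusHom.comp g h = f ∧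
      ∀ (P : IntegralTorus) (h' : TorusHom T₁ P) (g' : TorusHom P T₂),
        IsFreeIsogeny h' → IsDilation g' → TorusHom.comp g' h' = f →
        ∃! φ : TorusHom P T₃,
          IsTorusIso φ ∧ TorusHom.comp φ h' = h ∧ TorusHom.comp g φ = g' := by
  classical
  obtain ⟨hsi, hfi, hsc, hfc⟩ := hf
  -- rank bookkeeping
  have r1 : Module.finrank ℤ T₂.Λ ≤ Module.finrank ℤ T₁.Λ :=
    LinearMap.finrank_le_finrank_of_injective hsi
  have r2 : Module.finrank ℤ T₁.Λ' ≤ Module.finrank ℤ T₂.Λ' :=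
    LinearMap.finrank_le_finrank_of_injective hfi
  have e1 := T₁.rank_eq
  have e2 := T₂.rank_eq
  have rank3 : Module.finrank ℤ T₁.Λ = Module.finrank ℤ T₂.Λ' := by omega
  -- the base change of f.flat to ℝ is bijective
  have hsurj : Function.Surjective (f.flat.baseChange ℝ) := by
    intro y
    induction y using TensorProduct.induction_on with
    | zero => exact ⟨0, map_zero _⟩
    | tmul r c =>
        obtain ⟨n, hn, hmem⟩ := aux_exists_smul_mem _ hfc c
        obtain ⟨d, hd⟩ := hmem
        refine ⟨((n : ℝ)⁻¹ * r) ⊗ₜ d, ?_⟩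
        rw [LinearMap.baseChange_tmul, hd, tmul_smul, smul_tmul']
        congr 1
        rw [zsmul_eq_mul]
        have : (n : ℝ) ≠ 0 := Int.cast_ne_zero.2 hn
        field_simp
    | add x y hx hy =>
        obtain ⟨a, ha⟩ := hx; obtain ⟨b, hb⟩ := hy
        exact ⟨a + b, by rw [map_add, ha, hb]⟩
  have hbij : Function.Bijective (f.flat.baseChange ℝ) := by
    have hd : Module.finrank ℝ (ℝ ⊗[ℤ] T₁.Λ') = Module.finrank ℝ (ℝ ⊗[ℤ] T₂.Λ') := by
      rw [Module.finrank_baseChange, Module.finrank_baseChange]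
      omega
    exact ⟨(LinearMap.injective_iff_surjective_of_finrank_eq_finrank hd).2 hsurj, hsurj⟩
  set eflat : (ℝ ⊗[ℤ] T₁.Λ') ≃ₗ[ℝ] ℝ ⊗[ℤ] T₂.Λ' :=
    LinearEquiv.ofBijective (f.flat.baseChange ℝ) hbij with heflat
  set b1 : ℝ ⊗[ℤ] T₁.Λ' →ₗ[ℝ] (T₁.Λ →ₗ[ℤ] ℝ) := LinearMap.liftBaseChange ℝ T₁.pair.flip with hb1
  -- the intermediate pairing
  set pr : T₁.Λ →ₗ[ℤ] T₂.Λ' →ₗ[ℤ] ℝ :=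
    ((((b1.comp eflat.symm.toLinearMap).restrictScalars ℤ).comp
      (TensorProduct.mk ℤ ℝ T₂.Λ' (1 : ℝ)))).flip with hpr
  have eflat_apply : ∀ x, eflat x = f.flat.baseChange ℝ x := fun x => rfl
  have key1 : ∀ (l : T₁.Λ) (b : T₁.Λ'), pr l (f.flat b) = T₁.pair l b := by
    intro l b
    have h1 : eflat ((1 : ℝ) ⊗ₜ b) = (1 : ℝ) ⊗ₜ (f.flat b) := by
      rw [eflat_apply, LinearMap.baseChange_tmul]
    have h2 : eflat.symm ((1 : ℝ) ⊗ₜ f.flat b) = (1 : ℝ) ⊗ₜ b := by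
      rw [← h1, LinearEquiv.symm_apply_apply]
    show b1 (eflat.symm ((1 : ℝ) ⊗ₜ f.flat b)) l = _
    rw [h2]
    simp [hb1, LinearMap.liftBaseChange_tmul]
  have key : ∀ (a : T₂.Λ) (x : ℝ ⊗[ℤ] T₁.Λ'),
      b1 x (f.sharp a) =
        (LinearMap.liftBaseChange ℝ T₂.pair.flip) (f.flat.baseChange ℝ x) a := by
    intro a x
    induction x using TensorProduct.induction_on with
    | zero => simp
    | tmul r c =>
        simp [hb1, LinearMap.liftBaseChange_tmul, f.compat]
    | add x y hx hy =>
        rw [map_add, map_add, LinearMap.add_apply, map_add, LinearMap.add_apply, hx, hy]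
  have key2 : ∀ (a : T₂.Λ) (b : T₂.Λ'), pr (f.sharp a) b = T₂.pair a b := by
    intro a b
    have he : (f.flat.baseChange ℝ) (eflat.symm ((1 : ℝ) ⊗ₜ b)) = (1 : ℝ) ⊗ₜ b := by
      rw [← eflat_apply, LinearEquiv.apply_symm_apply]
    have := key a (eflat.symm ((1 : ℝ) ⊗ₜ b))
    rw [he] at this
    show b1 (eflat.symm ((1 : ℝ) ⊗ₜ b)) (f.sharp a) = _
    simpa [LinearMap.liftBaseChange_tmul] using this
  have nondeg3 : ∀ l : T₁.Λ, l ≠ 0 → ∃ l', pr l l' ≠ 0 := by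
    intro l hl
    obtain ⟨l', hl'⟩ := T₁.nondeg l hl
    exact ⟨f.flat l', by rw [key1]; exact hl'⟩
  have nondeg3' : ∀ b : T₂.Λ', b ≠ 0 → ∃ l, pr l b ≠ 0 := by
    intro b hb
    obtain ⟨n, hn, hmem⟩ := aux_exists_smul_mem _ hfc b
    obtain ⟨d, hd⟩ := hmem
    have hd0 : d ≠ 0 := by
      rintro rfl
      rw [map_zero] at hd
      rcases smul_eq_zero.mp hd.symm with h | h
      · exact hn h
      · exact hb h
    obtain ⟨l, hl⟩ := T₁.nondeg' d hd0
    refine ⟨l, fun h0 => hl ?_⟩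
    have h1 : pr l (n • b) = 0 := by rw [map_smul, h0, smul_zero]
    rw [← hd, key1] at h1
    exact h1
  -- the middle torus and the two maps
  refine ⟨⟨T₁.Λ, T₂.Λ', T₁.grp, T₂.grp', T₁.fr, T₂.fr', T₁.fin, T₂.fin', pr, rank3,
      nondeg3, nondeg3'⟩,
    ⟨LinearMap.id, f.flat, fun a b => (key1 a b).symm⟩,
    ⟨f.sharp, LinearMap.id, fun a b => key2 a b⟩, ?_, ?_, ?_, ?_⟩
  · exact ⟨⟨Function.injective_id, hfi, aux_finite_quot_top, hfc⟩, Function.bijective_id⟩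
  · exact ⟨⟨hsi, Function.injective_id, hsc, aux_finite_quot_top⟩, Function.bijective_id⟩
  · exact TorusHom.ext' (LinearMap.id_comp _) (LinearMap.id_comp _)
  · intro P h' g' ⟨hiso', hbij'⟩ ⟨giso', gbij'⟩ hcomp
    have hsharp_eq : h'.sharp.comp g'.sharp = f.sharp := congrArg TorusHom.sharp hcomp
    have hflat_eq : g'.flat.comp h'.flat = f.flat := congrArg TorusHom.flat hcomp
    set e : P.Λ ≃ₗ[ℤ] T₁.Λ := LinearEquiv.ofBijective h'.sharp hbij' with he
    have e_apply : ∀ x, e x = h'.sharp x := fun x => rfl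
    have keyφ : ∀ (c : P.Λ) (b : P.Λ'), P.pair c b = pr (h'.sharp c) (g'.flat b) := by
      intro c b
      obtain ⟨n, hn, hmem⟩ := aux_exists_smul_mem _ hiso'.2.2.2 b
      obtain ⟨d, hd⟩ := hmem
      have step : pr (h'.sharp c) (g'.flat (n • b)) = P.pair c (n • b) := by
        rw [← hd]
        have hgf : g'.flat (h'.flat d) = f.flat d := by
          rw [← LinearMap.comp_apply, hflat_eq]
        rw [hgf, key1, h'.compat]
      rw [map_smul, map_smul, map_smul] at step
      have : (n : ℝ) * pr (h'.sharp c) (g'.flat b) = (n : ℝ) * P.pair c b := by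
        simpa [zsmul_eq_mul] using step
      exact (mul_left_cancel₀ (Int.cast_ne_zero.2 hn) this).symm
    refine ⟨⟨e.symm.toLinearMap, g'.flat, fun a b => ?_⟩, ⟨⟨e.symm.bijective, gbij'⟩, ?_, ?_⟩, ?_⟩
    · -- compat of φ
      have : a = h'.sharp (e.symm a) := by rw [← e_apply, e.apply_symm_apply]
      calc P.pair (e.symm.toLinearMap a) b = P.pair (e.symm a) b := rfl
        _ = pr (h'.sharp (e.symm a)) (g'.flat b) := keyφ _ _
        _ = pr a (g'.flat b) := by rw [← this]
    · -- comp φ h' = h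
      refine TorusHom.ext' ?_ ?_
      · apply LinearMap.ext; intro a
        show h'.sharp (e.symm a) = a
        rw [← e_apply, e.apply_symm_apply]
      · exact hflat_eq
    · -- comp g φ = g'
      refine TorusHom.ext' ?_ ?_
      · apply LinearMap.ext; intro a
        show e.symm (f.sharp a) = g'.sharp a
        rw [← hsharp_eq]
        show e.symm (h'.sharp (g'.sharp a)) = g'.sharp a
        rw [← e_apply, e.symm_apply_apply]
      · exact LinearMap.id_comp _
    · -- uniqueness
      rintro ψ ⟨hψiso, hψ1, hψ2⟩
      refine TorusHom.ext' ?_ ?_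
      · have h1 : h'.sharp.comp ψ.sharp = LinearMap.id := congrArg TorusHom.sharp hψ1
        apply LinearMap.ext; intro a
        apply hbij'.1
        have : h'.sharp (ψ.sharp a) = a := by
          have := congrArg (fun (m : _ →ₗ[ℤ] _) => m a) h1
          simpa using this
        rw [this]
        show a = h'.sharp (e.symm a)
        rw [← e_apply, e.apply_symm_apply]
      · have h2 : LinearMap.id.comp ψ.flat = g'.flat := congrArg TorusHom.flat hψ2
        rw [LinearMap.id_comp] at h2
        exact h2
end

section
/- Let Σ = (Λ, Λ', [·,·]) be an integral torus with a polarization ξ of type (a₁,…,a_g) and let A = a_g. Then there exists an integral torus Σ^pp = (Λ, Λ', [·,·]^pp) with a principal polarization ζ and a dilation f : Σ^pp → Σ such that f*ξ = A·ζ. -/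
/-- A polarization on an integral torus: a homomorphism `ξ : Λ' → Λ` such that
`(x, y) ↦ [ξ(x), y]` is symmetric and positive definite. -/
def IsPolarization (T : IntegralTorus) (ξ : T.Λ' →ₗ[ℤ] T.Λ) : Prop :=
  (∀ x y : T.Λ', T.pair (ξ x) y = T.pair (ξ y) x) ∧
    ∀ x : T.Λ', x ≠ 0 → 0 < T.pair (ξ x) x

/-- Let `Σ = (Λ, Λ', [·,·])` be an integral torus with a polarization `ξ` of type
`(a₁, …, a_g)` (exhibited by Smith normal form bases `e, e'` with `ξ(e'ᵢ) = aᵢ • eᵢ` and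
`aᵢ ∣ aᵢ₊₁`), and let `A = a_g`.  Then there is an integral torus
`Σ^pp = (Λ, Λ', [·,·]^pp)` (same lattices, new nondegenerate pairing `pp`) carrying a
principal polarization `ζ` together with a dilation `f : Σ^pp → Σ` such that the induced
polarization satisfies `f*ξ = f^# ∘ ξ ∘ f_# = A • ζ`. -/
theorem stmt15 (T : IntegralTorus) (n : ℕ)
    (e : Module.Basis (Fin (n + 1)) ℤ T.Λ) (e' : Module.Basis (Fin (n + 1)) ℤ T.Λ')
    (ξ : T.Λ' →ₗ[ℤ] T.Λ) (hξpol : IsPolarization T ξ)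
    (a : Fin (n + 1) → ℤ) (ha : ∀ i, 0 < a i)
    (hdvd : ∀ i : Fin n, a i.castSucc ∣ a i.succ)
    (hsnf : ∀ i, ξ (e' i) = a i • e i) :
    ∃ (pp : T.Λ →ₗ[ℤ] T.Λ' →ₗ[ℤ] ℝ) (ζ : T.Λ' →ₗ[ℤ] T.Λ)
      (fs : T.Λ →ₗ[ℤ] T.Λ) (ff : T.Λ' →ₗ[ℤ] T.Λ'),
      -- `pp` is a nondegenerate pairing, so `(Λ, Λ', pp)` is an integral torus `Σ^pp`
      (∀ l : T.Λ, l ≠ 0 → ∃ l', pp l l' ≠ 0) ∧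
      (∀ l' : T.Λ', l' ≠ 0 → ∃ l, pp l l' ≠ 0) ∧
      -- `ζ` is a principal polarization on `Σ^pp`
      (∀ x y : T.Λ', pp (ζ x) y = pp (ζ y) x) ∧
      (∀ x : T.Λ', x ≠ 0 → 0 < pp (ζ x) x) ∧
      Function.Bijective ζ ∧
      -- `f = (fs, ff)` is a homomorphism `Σ^pp → Σ` which is a dilation
      (∀ (l : T.Λ) (l' : T.Λ'), pp (fs l) l' = T.pair l (ff l')) ∧
      Function.Injective fs ∧ Function.Bijective ff ∧
      Finite (T.Λ ⧸ LinearMap.range fs) ∧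
      -- the induced polarization `f*ξ` equals `A • ζ`
      (∀ x : T.Λ', fs (ξ (ff x)) = a (Fin.last n) • ζ x) := by
  classical
  set A := a (Fin.last n) with hA
  have hchain : ∀ i, a i ∣ A := by
    have key : ∀ j : Fin (n + 1), ∀ i, i ≤ j → a i ∣ a j := by
      intro j
      induction j using Fin.induction with
      | zero => intro i hi; rw [Fin.le_zero_iff.mp hi]
      | succ j ih =>
        intro i hi
        rcases eq_or_lt_of_le hi with h | h
        · rw [h]
        · exact (ih i (Fin.le_castSucc_iff.mpr h)).trans (hdvd j)
    exact fun i => key (Fin.last n) i (Fin.le_last i)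
  have hApos : (0 : ℤ) < A := ha _
  have hAposR : (0 : ℝ) < (A : ℝ) := by exact_mod_cast hApos
  have hAne : (A : ℝ) ≠ 0 := ne_of_gt hAposR
  -- the principal polarization and its inverse
  let ζe : T.Λ' ≃ₗ[ℤ] T.Λ := e'.equiv e (Equiv.refl _)
  have hζe : ∀ i, ζe (e' i) = e i := fun i => e'.equiv_apply _ e (Equiv.refl _)
  have hζsymm : ∀ i, ζe.symm (e i) = e' i := by
    intro i
    apply ζe.injective
    simp [hζe i]
  -- the new pairing
  let pp : T.Λ →ₗ[ℤ] T.Λ' →ₗ[ℤ] ℝ := LinearMap.mk₂ ℤ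
    (fun l l' => (A : ℝ)⁻¹ * T.pair (ξ (ζe.symm l)) l')
    (by intro x y z; simp [mul_add])
    (by intro c x y; simp [zsmul_eq_mul]; ring)
    (by intro x y z; simp [mul_add])
    (by intro c x y; simp [zsmul_eq_mul]; ring)
  have hpp : ∀ l l', pp l l' = (A : ℝ)⁻¹ * T.pair (ξ (ζe.symm l)) l' := fun _ _ => rfl
  -- f^#
  let fs : T.Λ →ₗ[ℤ] T.Λ := e.constr ℤ fun i => (A / a i) • e i
  have hfs : ∀ i, fs (e i) = (A / a i) • e i := fun i => e.constr_basis ℤ _ i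
  have hmain : ∀ l : T.Λ, ξ (ζe.symm (fs l)) = A • l := by
    have : ξ.comp ((ζe.symm.toLinearMap).comp fs) = A • LinearMap.id := by
      apply e.ext
      intro i
      simp only [LinearMap.comp_apply, LinearEquiv.coe_coe, LinearMap.smul_apply,
        LinearMap.id_apply, hfs i, map_zsmul, hζsymm i, hsnf i, smul_smul]
      rw [Int.ediv_mul_cancel (hchain i)]
    intro l
    have := congrArg (fun g => g l) this
    simpa using this
  have hppfs : ∀ (l : T.Λ) (l' : T.Λ'), pp (fs l) l' = T.pair l l' := by
    intro l l'
    rw [hpp, hmain l, map_zsmul]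
    simp only [LinearMap.smul_apply, zsmul_eq_mul]
    field_simp
  have hppζ : ∀ (x : T.Λ') (l' : T.Λ'), pp (ζe x) l' = (A : ℝ)⁻¹ * T.pair (ξ x) l' := by
    intro x l'
    rw [hpp, LinearEquiv.symm_apply_apply]
  have hξinj : Function.Injective ξ := by
    intro x y hxy
    by_contra hne
    have hx : x - y ≠ 0 := sub_ne_zero.mpr hne
    have := hξpol.2 _ hx
    rw [map_sub] at this
    simp [hxy] at this
  refine ⟨pp, ζe.toLinearMap, fs, LinearMap.id, ?_, ?_, ?_, ?_, ζe.bijective, ?_, ?_,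
    Function.bijective_id, ?_, ?_⟩
  · -- nondegeneracy in first variable
    intro l hl
    have h1 : ζe.symm l ≠ 0 := fun h => hl (by simpa using congrArg ζe h)
    have h2 : ξ (ζe.symm l) ≠ 0 := fun h => h1 (hξinj (by simpa using h))
    obtain ⟨l', hl'⟩ := T.nondeg _ h2
    exact ⟨l', by rw [hpp]; exact mul_ne_zero (inv_ne_zero hAne) hl'⟩
  · -- nondegeneracy in second variable
    intro l' hl'
    refine ⟨ζe l', ?_⟩
    rw [hppζ]
    exact ne_of_gt (mul_pos (inv_pos.mpr hAposR) (hξpol.2 _ hl'))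
  · -- symmetry
    intro x y
    simp only [LinearEquiv.coe_coe, hppζ]
    rw [hξpol.1]
  · -- positivity
    intro x hx
    simp only [LinearEquiv.coe_coe, hppζ]
    exact mul_pos (inv_pos.mpr hAposR) (hξpol.2 _ hx)
  · -- compatibility
    intro l l'
    simpa using hppfs l l'
  · -- fs injective
    intro x y hxy
    by_contra hne
    have hx : x - y ≠ 0 := sub_ne_zero.mpr hne
    obtain ⟨l', hl'⟩ := T.nondeg _ hx
    apply hl'
    have : pp (fs (x - y)) l' = 0 := by
      rw [map_sub, hxy]; simp
    rwa [hppfs] at this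
  · -- finiteness of the quotient
    have hsub : ∀ x : T.Λ, A • x ∈ LinearMap.range fs := by
      intro x
      let g : T.Λ →ₗ[ℤ] T.Λ := e.constr ℤ fun i => a i • e i
      refine ⟨g x, ?_⟩
      have : fs.comp g = A • LinearMap.id := by
        apply e.ext
        intro i
        simp only [LinearMap.comp_apply, LinearMap.smul_apply, LinearMap.id_apply, g,
          e.constr_basis, map_zsmul, hfs i, smul_smul]
        rw [Int.mul_ediv_cancel' (hchain i)]
      have := congrArg (fun h => h x) this
      simpa using this
    apply Module.finite_of_fg_torsion
    intro q
    obtain ⟨x, rfl⟩ := Submodule.Quotient.mk_surjective _ q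
    refine ⟨⟨A, mem_nonZeroDivisors_of_ne_zero (by exact_mod_cast hApos.ne')⟩, ?_⟩
    have : (A • x : T.Λ) ∈ LinearMap.range fs := hsub x
    simpa [Submodule.Quotient.mk_smul, Submodule.Quotient.mk_eq_zero] using
      (Submodule.Quotient.mk_eq_zero _).mpr this
  · -- induced polarization
    intro x
    simp only [LinearMap.id_coe, id_eq, LinearEquiv.coe_coe]
    apply ζe.symm.injective
    rw [map_zsmul, LinearEquiv.symm_apply_apply]
    apply hξinj
    rw [hmain (ξ x), map_zsmul]
end

section
/- For a polarization ξ of type (a₁,…,a_g) on an integral torus, the dual polarization ξ^∨ on the dual torus satisfies: ξ∘ξ^∨ and ξ^∨∘ξ are multiplication by a₁a_g on Λ and Λ' respectively, ξ^∨ has type (a₁, a₁a_g/a_{g−1}, …, a₁a_g/a₂, a_g), and ξ^∨ is principal if and only if ξ is principal. -/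
lemma aux_dvd_one {M N : Type} [AddCommGroup M] [AddCommGroup N]
    {m : ℕ} (b' : Module.Basis (Fin m) ℤ M) (b : Module.Basis (Fin m) ℤ N)
    (f : M →ₗ[ℤ] N) (c : Fin m → ℤ) (hc : ∀ i, f (b' i) = c i • b i)
    (hs : Function.Surjective f) (i : Fin m) : c i ∣ 1 := by
  obtain ⟨y, hy⟩ := hs (b i)
  have h1 : f y = ∑ j, (b'.repr y j * c j) • b j := by
    conv_lhs => rw [← b'.sum_repr y]
    rw [map_sum]
    refine Finset.sum_congr rfl fun j _ => ?_
    rw [LinearMap.map_smul, hc, smul_smul]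
  have h2 : b.repr (f y) i = b'.repr y i * c i := by
    rw [h1, map_sum]
    simp [Finsupp.single_apply]
  have h3 : b'.repr y i * c i = 1 := by
    rw [← h2, hy]; simp
  exact Dvd.intro_left _ h3

lemma aux_bij {M N : Type} [AddCommGroup M] [AddCommGroup N]
    {m : ℕ} (b' : Module.Basis (Fin m) ℤ M) (b : Module.Basis (Fin m) ℤ N)
    (f : M →ₗ[ℤ] N) (hc : ∀ i, f (b' i) = b i) : Function.Bijective f := by
  have h : f = (b'.equiv b (Equiv.refl _)).toLinearMap := b'.ext (fun i => by simp [hc])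
  rw [h]
  exact (b'.equiv b (Equiv.refl _)).bijective


/-- For a polarization `ξ` of type `(a₀, …, a_n)` on an integral torus (exhibited by
Smith normal form bases `e, e'` with `ξ(e'ᵢ) = aᵢ • eᵢ` and `aᵢ ∣ aᵢ₊₁`), the dual
polarization `ξ^∨` (defined by `ξ^∨(eᵢ) = (a₀·a_n/aᵢ) • e'ᵢ`) satisfies:
`ξ ∘ ξ^∨` and `ξ^∨ ∘ ξ` are multiplication by `a₀·a_n` on `Λ` and `Λ'` respectively;
`ξ^∨` has type `(a₀, a₀a_n/a_{n-1}, …, a₀a_n/a₁, a_n)`; and `ξ^∨` is principal if and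
only if `ξ` is principal. -/
theorem stmt16 (T : IntegralTorus) (n : ℕ)
    (e : Module.Basis (Fin (n + 1)) ℤ T.Λ) (e' : Module.Basis (Fin (n + 1)) ℤ T.Λ')
    (ξ : T.Λ' →ₗ[ℤ] T.Λ) (hξpol : IsPolarization T ξ)
    (a : Fin (n + 1) → ℤ) (ha : ∀ i, 0 < a i)
    (hdvd : ∀ i : Fin n, a i.castSucc ∣ a i.succ)
    (hsnf : ∀ i, ξ (e' i) = a i • e i)
    (ξd : T.Λ →ₗ[ℤ] T.Λ')
    (hξd : ∀ i, ξd (e i) = (a 0 * (a (Fin.last n) / a i)) • e' i) :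
    (∀ x : T.Λ, ξ (ξd x) = (a 0 * a (Fin.last n)) • x) ∧
    (∀ y : T.Λ', ξd (ξ y) = (a 0 * a (Fin.last n)) • y) ∧
    (∃ (fb : Module.Basis (Fin (n + 1)) ℤ T.Λ) (fb' : Module.Basis (Fin (n + 1)) ℤ T.Λ'),
        (∀ i, ξd (fb i) = (a 0 * (a (Fin.last n) / a i.rev)) • fb' i) ∧
        (∀ i : Fin n,
          (a 0 * (a (Fin.last n) / a i.castSucc.rev)) ∣
            (a 0 * (a (Fin.last n) / a i.succ.rev)))) ∧
    (Function.Bijective ξd ↔ Function.Bijective ξ) := by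
  -- divisibility chain: every `a i` divides `a (Fin.last n)`
  have hchain : ∀ k : ℕ, ∀ hk : k ≤ n, ∀ i : Fin (n + 1), (i : ℕ) ≤ k →
      a i ∣ a ⟨k, Nat.lt_succ_of_le hk⟩ := by
    intro k
    induction k with
    | zero =>
      intro hk i hi
      have : i = ⟨0, Nat.lt_succ_of_le hk⟩ := Fin.ext (Nat.le_zero.mp hi)
      rw [this]
    | succ k ih =>
      intro hk i hi
      rcases Nat.le_succ_iff_eq_or_le.mp hi with h | h
      · have hik : i = ⟨k + 1, Nat.lt_succ_of_le hk⟩ := Fin.ext (by simpa using h)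
        rw [hik]
      · have hk' : k < n := hk
        have h1 := ih (le_of_lt hk') i h
        have h2 := hdvd ⟨k, hk'⟩
        have hc1 : (⟨k, hk'⟩ : Fin n).castSucc = ⟨k, Nat.lt_succ_of_le (le_of_lt hk')⟩ := rfl
        have hc2 : (⟨k, hk'⟩ : Fin n).succ = ⟨k + 1, Nat.lt_succ_of_le hk⟩ := rfl
        rw [hc1, hc2] at h2
        exact h1.trans h2
  have hlast : ∀ i, a i ∣ a (Fin.last n) := fun i =>
    hchain n le_rfl i (Nat.lt_succ_iff.mp i.isLt)
  have hd : ∀ i, a i * (a (Fin.last n) / a i) = a (Fin.last n) := fun i =>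
    Int.mul_ediv_cancel' (hlast i)
  have hone : ∀ z : ℤ, 0 < z → z ∣ 1 → z = 1 := by
    intro z hz hdv
    have := Int.le_of_dvd one_pos hdv
    omega
  have hdpos : ∀ i, 0 < a (Fin.last n) / a i := by
    intro i
    by_contra hcon
    push_neg at hcon
    have h1 := ha i
    have h2 := ha (Fin.last n)
    nlinarith [hd i]
  -- part 1
  have key1 : ∀ x : T.Λ, ξ (ξd x) = (a 0 * a (Fin.last n)) • x := by
    have heq : ξ.comp ξd = (a 0 * a (Fin.last n)) • (LinearMap.id : T.Λ →ₗ[ℤ] T.Λ) := by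
      apply e.ext
      intro i
      simp only [LinearMap.comp_apply, LinearMap.smul_apply, LinearMap.id_apply, hξd,
        LinearMap.map_smul, hsnf, smul_smul]
      congr 1
      rw [mul_assoc, mul_comm (a (Fin.last n) / a i) (a i), hd i]
    intro x
    exact LinearMap.congr_fun heq x
  -- part 2
  have key2 : ∀ y : T.Λ', ξd (ξ y) = (a 0 * a (Fin.last n)) • y := by
    have heq : ξd.comp ξ = (a 0 * a (Fin.last n)) • (LinearMap.id : T.Λ' →ₗ[ℤ] T.Λ') := by
      apply e'.ext
      intro i
      simp only [LinearMap.comp_apply, LinearMap.smul_apply, LinearMap.id_apply, hsnf,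
        LinearMap.map_smul, hξd, smul_smul]
      congr 1
      rw [← mul_assoc, mul_comm (a i) (a 0), mul_assoc, hd i]
    intro y
    exact LinearMap.congr_fun heq y
  refine ⟨key1, key2, ⟨e.reindex Fin.revPerm, e'.reindex Fin.revPerm, ?_, ?_⟩, ?_⟩
  · intro i
    simp only [Module.Basis.reindex_apply, Fin.revPerm_symm, Fin.revPerm_apply]
    exact hξd i.rev
  · intro i
    rw [Fin.rev_castSucc, Fin.rev_succ]
    set j := i.rev with hj
    refine mul_dvd_mul_left (a 0) ?_
    obtain ⟨r, hr⟩ := hdvd j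
    refine ⟨r, ?_⟩
    apply mul_left_cancel₀ (ha j.castSucc).ne'
    rw [hd, mul_comm (a (Fin.last n) / a j.succ) r, ← mul_assoc, ← hr, hd]
  · constructor
    · intro hbij
      have hu : ∀ i, a 0 * (a (Fin.last n) / a i) ∣ 1 := fun i =>
        aux_dvd_one e e' ξd _ hξd hbij.2 i
      have heq1 : ∀ i, a 0 * (a (Fin.last n) / a i) = 1 := fun i =>
        hone _ (mul_pos (ha 0) (hdpos i)) (hu i)
      have han : a (Fin.last n) = 1 := (hd 0).symm.trans (heq1 0)
      have hai : ∀ i, a i = 1 := fun i =>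
        hone _ (ha i) (han ▸ hlast i)
      refine aux_bij e' e ξ (fun i => ?_)
      rw [hsnf, hai, one_smul]
    · intro hbij
      have hu : ∀ i, a i ∣ 1 := fun i => aux_dvd_one e' e ξ a hsnf hbij.2 i
      have hai : ∀ i, a i = 1 := fun i => hone _ (ha i) (hu i)
      refine aux_bij e e' ξd (fun i => ?_)
      rw [hξd, hai i, hai 0, hai (Fin.last n)]
      norm_num
end
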